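/- Assume p_{i+} > 0 for every row i. Let t be an integer with 1 ≤ t < c and S_t(p_{+·}) ≠ 1. Then λ^{K(t)}_{Y|X} = 1 if and only if p_{i+} = S_t(p_{i·}) for every row i = 1, …, r (i.e., each row of the table contains at most t nonzero cell probabilities). -/

import Mathlib

/-- `Smax t q` : the maximum, over subsets `T` of the index type with `T.card = t`,
of `∑ j ∈ T, q j` (i.e. the sum of the `t` largest entries of `q`). -/
noncomputable def Smax {n : ℕ} (t : ℕ) (q : Fin n → ℝ) : ℝ :=
  sSup ((fun T : Finset (Fin n) => ∑ j ∈ T, q j) '' {T : Finset (Fin n) | T.card = t})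

/-- Row marginals `p_{i+}`. -/
noncomputable def rowMarg {r c : ℕ} (p : Fin r → Fin c → ℝ) : Fin r → ℝ :=
  fun i => ∑ j, p i j

/-- Column marginals `p_{+j}`. -/
noncomputable def colMarg {r c : ℕ} (p : Fin r → Fin c → ℝ) : Fin c → ℝ :=
  fun j => ∑ i, p i j

/-- The measure `λ^{(t)}_{Y|X}` based on multi-categorical proportional reduction in error. -/
noncomputable def lambdaT {r c : ℕ} (t : ℕ) (p : Fin r → Fin c → ℝ) : ℝ :=
  (∑ i, Smax t (p i) - Smax t (colMarg p)) / (1 - Smax t (colMarg p))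

/-- The alternative measure `λ^{K(t)}_{Y|X}`. -/
noncomputable def lambdaKT {r c : ℕ} (t : ℕ) (p : Fin r → Fin c → ℝ) : ℝ :=
  (Real.sqrt (∑ i, (Smax t (p i)) ^ 2 / rowMarg p i) - Smax t (colMarg p)) /
    (1 - Smax t (colMarg p))

lemma Smax_exists {n t : ℕ} (ht : t ≤ n) (q : Fin n → ℝ) :
    ∃ T : Finset (Fin n), T.card = t ∧ Smax t q = ∑ j ∈ T, q j := by
  have hne : ({T : Finset (Fin n) | T.card = t}).Nonempty := by
    obtain ⟨T, _, hT⟩ := Finset.exists_subset_card_eq (s := (Finset.univ : Finset (Fin n))) (n := t)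
      (by simpa using ht)
    exact ⟨T, hT⟩
  have hfin : ((fun T : Finset (Fin n) => ∑ j ∈ T, q j) '' {T | T.card = t}).Finite :=
    (Set.toFinite _).image _
  have := (hne.image _).csSup_mem hfin
  obtain ⟨T, hT, hEq⟩ := this
  exact ⟨T, hT, hEq.symm⟩

lemma Smax_nonneg {n t : ℕ} (ht : t ≤ n) (q : Fin n → ℝ) (hq : ∀ j, 0 ≤ q j) :
    0 ≤ Smax t q := by
  obtain ⟨T, _, hEq⟩ := Smax_exists ht q
  rw [hEq]; exact Finset.sum_nonneg fun j _ => hq j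

lemma Smax_le_sum {n t : ℕ} (ht : t ≤ n) (q : Fin n → ℝ) (hq : ∀ j, 0 ≤ q j) :
    Smax t q ≤ ∑ j, q j := by
  obtain ⟨T, _, hEq⟩ := Smax_exists ht q
  rw [hEq]
  exact Finset.sum_le_sum_of_subset_of_nonneg (Finset.subset_univ T) fun j _ _ => hq j

/-- `λ^{K(t)}_{Y|X} = 1` iff `p_{i+} = S_t(p_{i·})` for every row `i`. -/
theorem lambdaKT_eq_one_iff
    (r c : ℕ) (hr : 2 ≤ r) (hc : 2 ≤ c)
    (p : Fin r → Fin c → ℝ) (hp : ∀ i j, 0 ≤ p i j)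
    (hsum : ∑ i, ∑ j, p i j = 1)
    (hpos : ∀ i, 0 < rowMarg p i)
    (t : ℕ) (ht1 : 1 ≤ t) (htc : t < c)
    (hS : Smax t (colMarg p) ≠ 1) :
    lambdaKT t p = 1 ↔ ∀ i, rowMarg p i = Smax t (p i) := by
  have htc' : t ≤ c := le_of_lt htc
  set S := Smax t (colMarg p) with hSdef
  have hcol_nonneg : ∀ j, 0 ≤ colMarg p j := fun j =>
    Finset.sum_nonneg fun i _ => hp i j
  have hcolsum : ∑ j, colMarg p j = 1 := by
    rw [← hsum]; exact Finset.sum_comm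
  have hS1 : S ≤ 1 := by
    have := Smax_le_sum htc' (colMarg p) hcol_nonneg
    rwa [hcolsum] at this
  have hSlt : S < 1 := lt_of_le_of_ne hS1 hS
  have hden : (1 : ℝ) - S ≠ 0 := by linarith
  -- bounds on rows
  have hrow_le : ∀ i, Smax t (p i) ≤ rowMarg p i := fun i =>
    Smax_le_sum htc' (p i) (hp i)
  have hrow_nn : ∀ i, 0 ≤ Smax t (p i) := fun i =>
    Smax_nonneg htc' (p i) (hp i)
  have hterm_le : ∀ i, (Smax t (p i)) ^ 2 / rowMarg p i ≤ rowMarg p i := by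
    intro i
    rw [div_le_iff₀ (hpos i)]
    have := hrow_le i
    nlinarith [hrow_nn i, hpos i]
  have hA_nn : 0 ≤ ∑ i, (Smax t (p i)) ^ 2 / rowMarg p i :=
    Finset.sum_nonneg fun i _ => div_nonneg (sq_nonneg _) (hpos i).le
  have hrowsum : ∑ i, rowMarg p i = 1 := hsum
  have key : lambdaKT t p = 1 ↔
      Real.sqrt (∑ i, (Smax t (p i)) ^ 2 / rowMarg p i) = 1 := by
    rw [lambdaKT, div_eq_one_iff_eq hden]
    constructor
    · intro h; linarith
    · intro h; linarith
  rw [key, Real.sqrt_eq_one]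
  constructor
  · intro hA i
    have := (Finset.sum_eq_sum_iff_of_le (fun i _ => hterm_le i)).1
      (by rw [hA, hrowsum]) i (Finset.mem_univ i)
    have h2 : (Smax t (p i)) ^ 2 = rowMarg p i * rowMarg p i :=
      (div_eq_iff (hpos i).ne').1 this
    nlinarith [hrow_nn i, hpos i, hrow_le i]
  · intro h
    have : ∀ i, (Smax t (p i)) ^ 2 / rowMarg p i = rowMarg p i := by
      intro i
      rw [← h i, sq, mul_div_assoc, div_self (hpos i).ne', mul_one]
    simp_rw [this]; exact hrowsum
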